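/- Zero-volume case: let Δ₀ : ℝ → ℝ be Lebesgue integrable with ∫_ℝ Δ₀(Y) dY = 0 and ∫_ℝ |Y·Δ₀(Y)| dY < ∞, set M₁ = ∫_ℝ Y·Δ₀(Y) dY, and define Δ(X,T) = ∫_ℝ G(X−Y,T) Δ₀(Y) dY for T > 0. Then the rescaled solution converges uniformly to the first derivative of the attractor: lim_{T→∞} sup_{U∈ℝ} |T^{1/2} · Δ(U·T^{1/4}, T) + M₁ · φ′(U)| = 0, where φ′(U) = −(1/(2π)) ∫_ℝ Q·exp(−Q⁴) sin(QU) dQ. -/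

import Mathlib

open MeasureTheory Real Filter

/-- The Green's function of the linearized capillary-driven thin film equation. -/
noncomputable def greenFn (X T : ℝ) : ℝ :=
  (1 / (2 * Real.pi)) * ∫ K : ℝ, Real.exp (-K ^ 4 * T) * Real.cos (K * X)

/-- The derivative of the universal self-similar attractor:
`φ′(U) = −(1/(2π)) ∫ Q, Q exp(−Q⁴) sin(Q U)`. -/
noncomputable def phiDeriv (U : ℝ) : ℝ :=
  -((1 / (2 * Real.pi)) * ∫ Q : ℝ, Q * Real.exp (-Q ^ 4) * Real.sin (Q * U))


lemma aux_exp_bound (Q : ℝ) : Real.exp (-Q ^ 4) ≤ Real.exp 1 * Real.exp (-1 * Q ^ 2) := by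
  rw [← Real.exp_add]
  apply Real.exp_le_exp.mpr
  nlinarith [sq_nonneg (Q ^ 2 - 1), sq_nonneg Q]

lemma integrable_e4 : Integrable fun Q : ℝ => Real.exp (-Q ^ 4) := by
  apply Integrable.mono' ((integrable_exp_neg_mul_sq one_pos).const_mul (Real.exp 1))
  · exact (Real.continuous_exp.comp (by continuity)).aestronglyMeasurable
  · filter_upwards with Q
    rw [Real.norm_eq_abs, abs_of_pos (Real.exp_pos _)]
    exact aux_exp_bound Q

lemma integrable_abs_e4 : Integrable fun Q : ℝ => |Q| * Real.exp (-Q ^ 4) := by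
  apply Integrable.mono' (((integrable_mul_exp_neg_mul_sq one_pos).abs).const_mul (Real.exp 1))
  · exact ((continuous_abs).mul (Real.continuous_exp.comp (by continuity))).aestronglyMeasurable
  · filter_upwards with Q
    rw [Real.norm_eq_abs, abs_of_nonneg (by positivity), abs_mul,
      abs_of_pos (Real.exp_pos _)]
    calc |Q| * Real.exp (-Q ^ 4) ≤ |Q| * (Real.exp 1 * Real.exp (-1 * Q ^ 2)) := by
          exact mul_le_mul_of_nonneg_left (aux_exp_bound Q) (abs_nonneg Q)
      _ = Real.exp 1 * (|Q| * Real.exp (-1 * Q ^ 2)) := by ring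

lemma integrable_sq_e4 : Integrable fun Q : ℝ => Q ^ 2 * Real.exp (-Q ^ 4) := by
  have h2 : Integrable fun x : ℝ => x ^ (2 : ℝ) * Real.exp (-1 * x ^ 2) :=
    integrable_rpow_mul_exp_neg_mul_sq one_pos (by norm_num)
  apply Integrable.mono' (h2.const_mul (Real.exp 1))
  · exact ((continuous_pow 2).mul (Real.continuous_exp.comp (by continuity))).aestronglyMeasurable
  · filter_upwards with Q
    rw [Real.norm_eq_abs, abs_of_nonneg (by positivity)]
    have : Q ^ (2 : ℝ) = Q ^ 2 := by
      rw [show ((2:ℝ) = ((2:ℕ):ℝ)) by norm_num, Real.rpow_natCast]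
    rw [this]
    calc Q ^ 2 * Real.exp (-Q ^ 4) ≤ Q ^ 2 * (Real.exp 1 * Real.exp (-1 * Q ^ 2)) := by
          exact mul_le_mul_of_nonneg_left (aux_exp_bound Q) (sq_nonneg Q)
      _ = Real.exp 1 * (Q ^ 2 * Real.exp (-1 * Q ^ 2)) := by ring



noncomputable def phiFn (U : ℝ) : ℝ :=
  (1 / (2 * Real.pi)) * ∫ Q : ℝ, Real.exp (-Q ^ 4) * Real.cos (Q * U)


lemma integrable_cos (U : ℝ) :
    Integrable fun Q : ℝ => Real.exp (-Q ^ 4) * Real.cos (Q * U) := by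
  apply Integrable.mono' integrable_e4
  · exact ((Real.continuous_exp.comp (by continuity)).mul
      (Real.continuous_cos.comp (by continuity))).aestronglyMeasurable
  · filter_upwards with Q
    rw [Real.norm_eq_abs, abs_mul, abs_of_pos (Real.exp_pos _)]
    exact mul_le_of_le_one_right (Real.exp_pos _).le (Real.abs_cos_le_one _)

lemma integrable_sin (U : ℝ) :
    Integrable fun Q : ℝ => Q * Real.exp (-Q ^ 4) * Real.sin (Q * U) := by
  apply Integrable.mono' integrable_abs_e4
  · exact (((continuous_id.mul (Real.continuous_exp.comp (by continuity)))).mul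
      (Real.continuous_sin.comp (by continuity))).aestronglyMeasurable
  · filter_upwards with Q
    rw [Real.norm_eq_abs, abs_mul, abs_mul, abs_of_pos (Real.exp_pos _)]
    exact mul_le_of_le_one_right (by positivity) (Real.abs_sin_le_one _)

lemma integral_hasDerivAt (U : ℝ) :
    HasDerivAt (fun x => ∫ Q : ℝ, Real.exp (-Q ^ 4) * Real.cos (Q * x))
      (∫ Q : ℝ, -(Q * Real.exp (-Q ^ 4) * Real.sin (Q * U))) U := by
  have h := hasDerivAt_integral_of_dominated_loc_of_deriv_le
    (F := fun (x : ℝ) (Q : ℝ) => Real.exp (-Q ^ 4) * Real.cos (Q * x))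
    (F' := fun (x : ℝ) (Q : ℝ) => -(Q * Real.exp (-Q ^ 4) * Real.sin (Q * x)))
    (x₀ := U) (bound := fun Q => |Q| * Real.exp (-Q ^ 4)) (s := Metric.ball U 1) (Metric.ball_mem_nhds U one_pos)
    (Eventually.of_forall fun x => (integrable_cos x).1)
    (integrable_cos U)
    ((integrable_sin U).neg.1)
    ?_ integrable_abs_e4 ?_
  · exact h.2
  · filter_upwards with Q
    intro x _
    rw [Real.norm_eq_abs, abs_neg, abs_mul, abs_mul, abs_of_pos (Real.exp_pos _)]
    exact mul_le_of_le_one_right (by positivity) (Real.abs_sin_le_one _)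
  · filter_upwards with Q
    intro x _
    have h1 : HasDerivAt (fun y : ℝ => Q * y) Q x := by
      simpa using (hasDerivAt_id x).const_mul Q
    have h2 := (Real.hasDerivAt_cos (Q * x)).comp x h1
    have h3 := h2.const_mul (Real.exp (-Q ^ 4))
    exact h3.congr_deriv (by ring)

lemma phi_hasDerivAt (U : ℝ) : HasDerivAt phiFn (phiDeriv U) U := by
  have h := (integral_hasDerivAt U).const_mul (1 / (2 * Real.pi))
  have he : phiDeriv U
      = (1 / (2 * Real.pi)) * ∫ Q : ℝ, -(Q * Real.exp (-Q ^ 4) * Real.sin (Q * U)) := by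
    rw [integral_neg, mul_neg, phiDeriv]
  rw [he]
  exact h

lemma phi_continuous : Continuous phiFn :=
  continuous_iff_continuousAt.mpr fun U => (phi_hasDerivAt U).continuousAt


noncomputable def Cone : ℝ := (1 / (2 * Real.pi)) * ∫ Q : ℝ, |Q| * Real.exp (-Q ^ 4)
noncomputable def Lc : ℝ := (1 / (2 * Real.pi)) * ∫ Q : ℝ, Q ^ 2 * Real.exp (-Q ^ 4)
noncomputable def Czero : ℝ := (1 / (2 * Real.pi)) * ∫ Q : ℝ, Real.exp (-Q ^ 4)


lemma hc_pos : (0 : ℝ) < 1 / (2 * Real.pi) := by positivity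

lemma Cone_nonneg : 0 ≤ Cone :=
  mul_nonneg hc_pos.le (integral_nonneg fun Q => by positivity)

lemma Lc_nonneg : 0 ≤ Lc :=
  mul_nonneg hc_pos.le (integral_nonneg fun Q => by positivity)

lemma psi_bound (U : ℝ) : |phiDeriv U| ≤ Cone := by
  rw [phiDeriv, abs_neg, abs_mul, abs_of_pos hc_pos, Cone]
  apply mul_le_mul_of_nonneg_left _ hc_pos.le
  calc |∫ Q : ℝ, Q * Real.exp (-Q ^ 4) * Real.sin (Q * U)|
      ≤ ∫ Q : ℝ, ‖Q * Real.exp (-Q ^ 4) * Real.sin (Q * U)‖ := by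
        simpa using norm_integral_le_integral_norm
          (fun Q : ℝ => Q * Real.exp (-Q ^ 4) * Real.sin (Q * U))
    _ ≤ ∫ Q : ℝ, |Q| * Real.exp (-Q ^ 4) := by
        apply integral_mono (integrable_sin U).norm integrable_abs_e4
        intro Q
        simp only [Real.norm_eq_abs, abs_mul, abs_of_pos (Real.exp_pos _)]
        exact mul_le_of_le_one_right (by positivity) (Real.abs_sin_le_one _)

lemma phi_bound (U : ℝ) : |phiFn U| ≤ Czero := by
  rw [phiFn, abs_mul, abs_of_pos hc_pos, Czero]
  apply mul_le_mul_of_nonneg_left _ hc_pos.le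
  calc |∫ Q : ℝ, Real.exp (-Q ^ 4) * Real.cos (Q * U)|
      ≤ ∫ Q : ℝ, ‖Real.exp (-Q ^ 4) * Real.cos (Q * U)‖ := by
        simpa using norm_integral_le_integral_norm
          (fun Q : ℝ => Real.exp (-Q ^ 4) * Real.cos (Q * U))
    _ ≤ ∫ Q : ℝ, Real.exp (-Q ^ 4) := by
        apply integral_mono (integrable_cos U).norm integrable_e4
        intro Q
        simp only [Real.norm_eq_abs, abs_mul, abs_of_pos (Real.exp_pos _)]
        exact mul_le_of_le_one_right (Real.exp_pos _).le (Real.abs_cos_le_one _)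

lemma sin_lip (a b : ℝ) : |Real.sin a - Real.sin b| ≤ |a - b| := by
  have h := Convex.norm_image_sub_le_of_norm_hasDerivWithin_le
    (f := Real.sin) (f' := Real.cos) (s := Set.univ) (C := 1)
    (fun x _ => (Real.hasDerivAt_sin x).hasDerivWithinAt)
    (fun x _ => by rw [Real.norm_eq_abs]; exact Real.abs_cos_le_one x)
    convex_univ (Set.mem_univ b) (Set.mem_univ a)
  simpa using h

lemma psi_lip (u v : ℝ) : |phiDeriv u - phiDeriv v| ≤ Lc * |u - v| := by
  have heq : phiDeriv u - phiDeriv v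
      = -((1 / (2 * Real.pi)) * ∫ Q : ℝ,
          (Q * Real.exp (-Q ^ 4) * Real.sin (Q * u) - Q * Real.exp (-Q ^ 4) * Real.sin (Q * v))) := by
    rw [integral_sub (integrable_sin u) (integrable_sin v), phiDeriv, phiDeriv]
    ring
  rw [heq, abs_neg, abs_mul, abs_of_pos hc_pos, Lc, mul_assoc]
  apply mul_le_mul_of_nonneg_left _ hc_pos.le
  calc |∫ Q : ℝ, (Q * Real.exp (-Q ^ 4) * Real.sin (Q * u) - Q * Real.exp (-Q ^ 4) * Real.sin (Q * v))|
      ≤ ∫ Q : ℝ, ‖Q * Real.exp (-Q ^ 4) * Real.sin (Q * u) - Q * Real.exp (-Q ^ 4) * Real.sin (Q * v)‖ := by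
        simpa using norm_integral_le_integral_norm
          (fun Q : ℝ => Q * Real.exp (-Q ^ 4) * Real.sin (Q * u) - Q * Real.exp (-Q ^ 4) * Real.sin (Q * v))
    _ ≤ ∫ Q : ℝ, Q ^ 2 * Real.exp (-Q ^ 4) * |u - v| := by
        have hsub : Integrable fun Q : ℝ =>
            Q * Real.exp (-Q ^ 4) * Real.sin (Q * u) - Q * Real.exp (-Q ^ 4) * Real.sin (Q * v) :=
          (integrable_sin u).sub (integrable_sin v)
        apply integral_mono hsub.norm (integrable_sq_e4.mul_const _)
        intro Q
        simp only
        have h1 : Q * Real.exp (-Q ^ 4) * Real.sin (Q * u) - Q * Real.exp (-Q ^ 4) * Real.sin (Q * v)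
            = Q * Real.exp (-Q ^ 4) * (Real.sin (Q * u) - Real.sin (Q * v)) := by ring
        rw [h1, Real.norm_eq_abs, abs_mul, abs_mul, abs_of_pos (Real.exp_pos _)]
        have h2 : |Real.sin (Q * u) - Real.sin (Q * v)| ≤ |Q| * |u - v| := by
          calc |Real.sin (Q * u) - Real.sin (Q * v)| ≤ |Q * u - Q * v| := sin_lip _ _
            _ = |Q| * |u - v| := by rw [← abs_mul]; ring_nf
        calc |Q| * Real.exp (-Q ^ 4) * |Real.sin (Q * u) - Real.sin (Q * v)|
            ≤ |Q| * Real.exp (-Q ^ 4) * (|Q| * |u - v|) :=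
              mul_le_mul_of_nonneg_left h2 (by positivity)
          _ = Q ^ 2 * Real.exp (-Q ^ 4) * |u - v| := by
              rw [← sq_abs]; ring
    _ = (∫ Q : ℝ, Q ^ 2 * Real.exp (-Q ^ 4)) * |u - v| := integral_mul_const _ _

lemma phi_lip (x y : ℝ) : |phiFn x - phiFn y| ≤ Cone * |x - y| := by
  have h := Convex.norm_image_sub_le_of_norm_hasDerivWithin_le
    (f := phiFn) (f' := phiDeriv) (s := Set.univ) (C := Cone)
    (fun t _ => (phi_hasDerivAt t).hasDerivWithinAt)
    (fun t _ => by rw [Real.norm_eq_abs]; exact psi_bound t)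
    convex_univ (Set.mem_univ y) (Set.mem_univ x)
  simpa [Real.norm_eq_abs] using h

lemma phi_taylor (x y : ℝ) :
    |phiFn x - phiFn y - phiDeriv y * (x - y)| ≤ Lc * (x - y) ^ 2 := by
  have h := Convex.norm_image_sub_le_of_norm_hasDerivWithin_le
    (f := fun t => phiFn t - phiDeriv y * t)
    (f' := fun t => phiDeriv t - phiDeriv y)
    (s := Set.uIcc y x) (C := Lc * |x - y|)
    (fun t _ => ((phi_hasDerivAt t).sub
      (by simpa using (hasDerivAt_id t).const_mul (phiDeriv y))).hasDerivWithinAt)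
    (fun t ht => by
      rw [Real.norm_eq_abs]
      calc |phiDeriv t - phiDeriv y| ≤ Lc * |t - y| := psi_lip t y
        _ ≤ Lc * |x - y| :=
          mul_le_mul_of_nonneg_left (Set.abs_sub_left_of_mem_uIcc ht) Lc_nonneg)
    (convex_uIcc y x) Set.left_mem_uIcc Set.right_mem_uIcc
  have h2 : phiFn x - phiDeriv y * x - (phiFn y - phiDeriv y * y)
      = phiFn x - phiFn y - phiDeriv y * (x - y) := by ring
  rw [Real.norm_eq_abs, Real.norm_eq_abs, h2] at h
  calc |phiFn x - phiFn y - phiDeriv y * (x - y)| ≤ Lc * |x - y| * |x - y| := h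
    _ = Lc * (x - y) ^ 2 := by rw [mul_assoc, abs_mul_abs_self, ← sq]



lemma greenFn_eq (X : ℝ) {T : ℝ} (hT : 0 < T) :
    greenFn X T = T ^ (-(1/4) : ℝ) * phiFn (X * T ^ (-(1/4) : ℝ)) := by
  set a : ℝ := T ^ ((1/4) : ℝ) with ha_def
  have ha : 0 < a := Real.rpow_pos_of_pos hT _
  have ha4 : a ^ 4 = T := by
    rw [ha_def, ← Real.rpow_natCast (T ^ ((1/4):ℝ)) 4, ← Real.rpow_mul hT.le]
    norm_num
  have hneg : T ^ (-(1/4) : ℝ) = a⁻¹ := by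
    rw [ha_def, ← Real.rpow_neg hT.le]
  have key : ∀ K : ℝ, Real.exp (-K ^ 4 * T) * Real.cos (K * X)
      = (fun Q => Real.exp (-Q ^ 4) * Real.cos (Q * (X * a⁻¹))) (a * K) := by
    intro K
    simp only
    congr 2
    · rw [mul_pow, ha4]; ring
    · field_simp
  rw [greenFn, phiFn]
  calc (1 / (2 * Real.pi)) * ∫ K : ℝ, Real.exp (-K ^ 4 * T) * Real.cos (K * X)
      = (1 / (2 * Real.pi)) * ∫ K : ℝ,
          (fun Q => Real.exp (-Q ^ 4) * Real.cos (Q * (X * a⁻¹))) (a * K) := by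
        congr 1; exact integral_congr_ae (Filter.Eventually.of_forall fun K => key K)
    _ = (1 / (2 * Real.pi)) * (|a⁻¹| • ∫ Q : ℝ, Real.exp (-Q ^ 4) * Real.cos (Q * (X * a⁻¹))) := by
        rw [MeasureTheory.Measure.integral_comp_mul_left
          (fun Q => Real.exp (-Q ^ 4) * Real.cos (Q * (X * a⁻¹))) a]
    _ = T ^ (-(1/4) : ℝ) * ((1 / (2 * Real.pi)) *
          ∫ Q : ℝ, Real.exp (-Q ^ 4) * Real.cos (Q * (X * T ^ (-(1/4) : ℝ)))) := by
        rw [hneg, smul_eq_mul, abs_of_pos (inv_pos.mpr ha)]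
        ring




lemma key_bound (Δ₀ : ℝ → ℝ) (hΔ₀ : Integrable Δ₀) (hvol : ∫ Y : ℝ, Δ₀ Y = 0)
    (hmom : Integrable fun Y : ℝ => Y * Δ₀ Y) {T : ℝ} (hT : 0 < T) (U : ℝ) :
    |T ^ ((1/2 : ℝ)) * (∫ Y : ℝ, greenFn (U * T ^ ((1/4 : ℝ)) - Y) T * Δ₀ Y)
        + (∫ Y : ℝ, Y * Δ₀ Y) * phiDeriv U|
      ≤ ∫ Y : ℝ, min (Lc * T ^ (-(1/4) : ℝ) * Y ^ 2) (2 * Cone * |Y|) * |Δ₀ Y| := by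
  set ε : ℝ := T ^ (-(1/4) : ℝ) with hε_def
  set b : ℝ := T ^ ((1/4) : ℝ) with hb_def
  have hε : 0 < ε := Real.rpow_pos_of_pos hT _
  have hb : 0 < b := Real.rpow_pos_of_pos hT _
  have hbe : b * ε = 1 := by
    rw [hb_def, hε_def, ← Real.rpow_add hT]; norm_num
  have h12 : T ^ ((1/2 : ℝ)) * ε = b := by
    rw [hb_def, hε_def, ← Real.rpow_add hT]; norm_num
  -- rewrite the integral
  have hint1 : Integrable fun Y : ℝ => phiFn (U - ε * Y) * Δ₀ Y := by
    apply hΔ₀.bdd_mul (c := Czero)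
    · exact (phi_continuous.comp (by continuity)).aestronglyMeasurable
    · exact Filter.Eventually.of_forall fun Y => (Real.norm_eq_abs _).trans_le (phi_bound _)
  have hgreen : (∫ Y : ℝ, greenFn (U * b - Y) T * Δ₀ Y)
      = ε * ∫ Y : ℝ, phiFn (U - ε * Y) * Δ₀ Y := by
    rw [← integral_const_mul]
    apply integral_congr_ae (Filter.Eventually.of_forall fun Y => ?_)
    rw [greenFn_eq _ hT, ← hε_def]
    have : (U * b - Y) * ε = U - ε * Y := by
      linear_combination U * hbe
    rw [this]; ring
  set I : ℝ := ∫ Y : ℝ, phiFn (U - ε * Y) * Δ₀ Y with hI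
  have hmain : T ^ ((1/2 : ℝ)) * (∫ Y : ℝ, greenFn (U * b - Y) T * Δ₀ Y)
        + (∫ Y : ℝ, Y * Δ₀ Y) * phiDeriv U
      = ∫ Y : ℝ, (b * (phiFn (U - ε * Y) - phiFn U) + Y * phiDeriv U) * Δ₀ Y := by
    have hfe : (fun Y : ℝ => (b * (phiFn (U - ε * Y) - phiFn U) + Y * phiDeriv U) * Δ₀ Y)
        = fun Y : ℝ => (b * (phiFn (U - ε * Y) * Δ₀ Y) - (b * phiFn U) * Δ₀ Y)
            + phiDeriv U * (Y * Δ₀ Y) := by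
      funext Y; ring
    have e1 : ∫ Y : ℝ, ((b * (phiFn (U - ε * Y) * Δ₀ Y) - (b * phiFn U) * Δ₀ Y)
          + phiDeriv U * (Y * Δ₀ Y))
        = (∫ Y : ℝ, (b * (phiFn (U - ε * Y) * Δ₀ Y) - (b * phiFn U) * Δ₀ Y))
          + ∫ Y : ℝ, phiDeriv U * (Y * Δ₀ Y) :=
      integral_add ((hint1.const_mul b).sub (hΔ₀.const_mul _)) (hmom.const_mul _)
    have e2 : ∫ Y : ℝ, (b * (phiFn (U - ε * Y) * Δ₀ Y) - (b * phiFn U) * Δ₀ Y)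
        = (∫ Y : ℝ, b * (phiFn (U - ε * Y) * Δ₀ Y)) - ∫ Y : ℝ, (b * phiFn U) * Δ₀ Y :=
      integral_sub (hint1.const_mul b) (hΔ₀.const_mul _)
    rw [hfe, e1, e2, integral_const_mul, integral_const_mul, integral_const_mul, hvol, hgreen,
      ← mul_assoc, h12]
    ring
  rw [hmain]
  -- now bound the integral
  have hminnn : ∀ Y : ℝ, 0 ≤ min (Lc * ε * Y ^ 2) (2 * Cone * |Y|) := by
    intro Y
    exact le_min (mul_nonneg (mul_nonneg Lc_nonneg hε.le) (sq_nonneg Y))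
      (mul_nonneg (mul_nonneg (by norm_num) Cone_nonneg) (abs_nonneg Y))
  have hptwise : ∀ Y : ℝ,
      ‖(b * (phiFn (U - ε * Y) - phiFn U) + Y * phiDeriv U) * Δ₀ Y‖
        ≤ min (Lc * ε * Y ^ 2) (2 * Cone * |Y|) * |Δ₀ Y| := by
    intro Y
    rw [Real.norm_eq_abs, abs_mul]
    apply mul_le_mul_of_nonneg_right _ (abs_nonneg _)
    apply le_min
    · -- Taylor bound
      have heq : b * (phiFn (U - ε * Y) - phiFn U + Y * phiDeriv U * ε)
          = b * (phiFn (U - ε * Y) - phiFn U) + Y * phiDeriv U := by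
        linear_combination (Y * phiDeriv U) * hbe
      rw [← heq, abs_mul, abs_of_pos hb]
      have htay : |phiFn (U - ε * Y) - phiFn U + Y * phiDeriv U * ε|
          ≤ Lc * (ε * Y) ^ 2 := by
        have h := phi_taylor (U - ε * Y) U
        have he2 : phiFn (U - ε * Y) - phiFn U - phiDeriv U * (U - ε * Y - U)
            = phiFn (U - ε * Y) - phiFn U + Y * phiDeriv U * ε := by ring
        have he3 : (U - ε * Y - U) ^ 2 = (ε * Y) ^ 2 := by ring
        rw [he2, he3] at h
        exact h
      calc b * |phiFn (U - ε * Y) - phiFn U + Y * phiDeriv U * ε|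
          ≤ b * (Lc * (ε * Y) ^ 2) := mul_le_mul_of_nonneg_left htay hb.le
        _ = Lc * ε * Y ^ 2 := by
            linear_combination (Lc * ε * Y ^ 2) * hbe
    · -- Lipschitz bound
      calc |b * (phiFn (U - ε * Y) - phiFn U) + Y * phiDeriv U|
          ≤ |b * (phiFn (U - ε * Y) - phiFn U)| + |Y * phiDeriv U| := abs_add_le _ _
        _ ≤ b * (Cone * |U - ε * Y - U|) + |Y| * Cone := by
            apply add_le_add
            · rw [abs_mul, abs_of_pos hb]
              exact mul_le_mul_of_nonneg_left (phi_lip _ _) hb.le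
            · rw [abs_mul]
              exact mul_le_mul_of_nonneg_left (psi_bound U) (abs_nonneg _)
        _ = 2 * Cone * |Y| := by
            have : |U - ε * Y - U| = ε * |Y| := by
              rw [show U - ε * Y - U = -(ε * Y) by ring, abs_neg, abs_mul, abs_of_pos hε]
            rw [this]
            linear_combination (Cone * |Y|) * hbe
  have hbnd_int : Integrable fun Y : ℝ => min (Lc * ε * Y ^ 2) (2 * Cone * |Y|) * |Δ₀ Y| := by
    apply Integrable.mono' ((hmom.abs).const_mul (2 * Cone))
    · exact (((continuous_const.mul (continuous_pow 2)).min
        (continuous_const.mul continuous_abs)).aestronglyMeasurable.mul hΔ₀.1.norm)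
    · filter_upwards with Y
      rw [Real.norm_eq_abs, abs_of_nonneg (mul_nonneg (hminnn Y) (abs_nonneg _))]
      calc min (Lc * ε * Y ^ 2) (2 * Cone * |Y|) * |Δ₀ Y|
          ≤ (2 * Cone * |Y|) * |Δ₀ Y| :=
            mul_le_mul_of_nonneg_right (min_le_right _ _) (abs_nonneg _)
        _ = 2 * Cone * |Y * Δ₀ Y| := by rw [abs_mul]; ring
  calc |∫ Y : ℝ, (b * (phiFn (U - ε * Y) - phiFn U) + Y * phiDeriv U) * Δ₀ Y|
      ≤ ∫ Y : ℝ, ‖(b * (phiFn (U - ε * Y) - phiFn U) + Y * phiDeriv U) * Δ₀ Y‖ := by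
        simpa using norm_integral_le_integral_norm
          (fun Y : ℝ => (b * (phiFn (U - ε * Y) - phiFn U) + Y * phiDeriv U) * Δ₀ Y)
    _ ≤ ∫ Y : ℝ, min (Lc * ε * Y ^ 2) (2 * Cone * |Y|) * |Δ₀ Y| := by
        apply integral_mono_of_nonneg (Filter.Eventually.of_forall fun Y => norm_nonneg _)
          hbnd_int (Filter.Eventually.of_forall hptwise)




lemma bound_tendsto (Δ₀ : ℝ → ℝ) (hΔ₀ : Integrable Δ₀)
    (hmom : Integrable fun Y : ℝ => Y * Δ₀ Y) :
    Tendsto (fun T : ℝ => ∫ Y : ℝ, min (Lc * T ^ (-(1/4) : ℝ) * Y ^ 2) (2 * Cone * |Y|) * |Δ₀ Y|)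
      atTop (nhds 0) := by
  have h := tendsto_integral_filter_of_dominated_convergence (μ := volume) (l := atTop)
    (F := fun (T : ℝ) (Y : ℝ) => min (Lc * T ^ (-(1/4) : ℝ) * Y ^ 2) (2 * Cone * |Y|) * |Δ₀ Y|)
    (f := fun _ : ℝ => (0 : ℝ))
    (bound := fun Y : ℝ => 2 * Cone * |Y * Δ₀ Y|)
    ?_ ?_ ((hmom.abs).const_mul (2 * Cone)) ?_
  · simpa using h
  · filter_upwards with T
    exact (((continuous_const.mul (continuous_pow 2)).min
      (continuous_const.mul continuous_abs)).aestronglyMeasurable.mul hΔ₀.1.norm)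
  · filter_upwards [eventually_gt_atTop (0 : ℝ)] with T hT
    filter_upwards with Y
    have hε : (0 : ℝ) ≤ T ^ (-(1/4) : ℝ) := Real.rpow_nonneg hT.le _
    have hmin : 0 ≤ min (Lc * T ^ (-(1/4) : ℝ) * Y ^ 2) (2 * Cone * |Y|) :=
      le_min (mul_nonneg (mul_nonneg Lc_nonneg hε) (sq_nonneg Y))
        (mul_nonneg (mul_nonneg (by norm_num) Cone_nonneg) (abs_nonneg Y))
    rw [Real.norm_eq_abs, abs_of_nonneg (mul_nonneg hmin (abs_nonneg _))]
    calc min (Lc * T ^ (-(1/4) : ℝ) * Y ^ 2) (2 * Cone * |Y|) * |Δ₀ Y|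
        ≤ (2 * Cone * |Y|) * |Δ₀ Y| :=
          mul_le_mul_of_nonneg_right (min_le_right _ _) (abs_nonneg _)
      _ = 2 * Cone * |Y * Δ₀ Y| := by rw [abs_mul]; ring
  · filter_upwards with Y
    have h1 : Tendsto (fun T : ℝ => Lc * T ^ (-(1/4) : ℝ) * Y ^ 2) atTop (nhds 0) := by
      have := ((tendsto_rpow_neg_atTop (by norm_num : (0:ℝ) < 1/4)).const_mul Lc).mul_const
        (Y ^ 2)
      simpa using this
    have h2 : Tendsto (fun T : ℝ => min (Lc * T ^ (-(1/4) : ℝ) * Y ^ 2) (2 * Cone * |Y|))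
        atTop (nhds 0) := by
      have := h1.min (tendsto_const_nhds (x := 2 * Cone * |Y|) (f := atTop))
      rwa [min_eq_left (mul_nonneg (mul_nonneg (by norm_num) Cone_nonneg) (abs_nonneg Y))] at this
    simpa using h2.mul_const |Δ₀ Y|

/-- Zero-volume case: if `Δ₀` is integrable with zero algebraic volume and finite first
absolute moment, with first moment `M₁`, then the rescaled solution
`U ↦ T^{1/2} Δ(U T^{1/4}, T)` converges uniformly, as `T → ∞`, to `−M₁ · φ′`, i.e.
`lim_{T→∞} sup_U |T^{1/2} Δ(U T^{1/4}, T) + M₁ φ′(U)| = 0`. -/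
theorem zero_volume_uniform_convergence (Δ₀ : ℝ → ℝ) (hΔ₀ : Integrable Δ₀)
    (hvol : ∫ Y : ℝ, Δ₀ Y = 0) (hmom : Integrable (fun Y : ℝ => Y * Δ₀ Y))
    (M₁ : ℝ) (hM₁ : M₁ = ∫ Y : ℝ, Y * Δ₀ Y)
    (Δ : ℝ → ℝ → ℝ) (hΔ : ∀ X T : ℝ, Δ X T = ∫ Y : ℝ, greenFn (X - Y) T * Δ₀ Y) :
    TendstoUniformly
      (fun (T : ℝ) (U : ℝ) => T ^ ((1 / 2 : ℝ)) * Δ (U * T ^ ((1 / 4 : ℝ))) T)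
      (fun U => -(M₁ * phiDeriv U)) atTop := by
  rw [Metric.tendstoUniformly_iff]
  intro η hη
  have hB := bound_tendsto Δ₀ hΔ₀ hmom
  have hB' : ∀ᶠ T in atTop,
      (∫ Y : ℝ, min (Lc * T ^ (-(1/4) : ℝ) * Y ^ 2) (2 * Cone * |Y|) * |Δ₀ Y|) < η :=
    hB.eventually_lt_const hη
  filter_upwards [hB', eventually_gt_atTop (0 : ℝ)] with T hBT hT U
  rw [Real.dist_eq]
  have hk := key_bound Δ₀ hΔ₀ hvol hmom hT U
  have hrw : Δ (U * T ^ ((1 / 4 : ℝ))) T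
      = ∫ Y : ℝ, greenFn (U * T ^ ((1 / 4 : ℝ)) - Y) T * Δ₀ Y := hΔ _ _
  have habs : |(-(M₁ * phiDeriv U)) - T ^ ((1 / 2 : ℝ)) * Δ (U * T ^ ((1 / 4 : ℝ))) T|
      = |T ^ ((1 / 2 : ℝ)) * (∫ Y : ℝ, greenFn (U * T ^ ((1 / 4 : ℝ)) - Y) T * Δ₀ Y)
          + (∫ Y : ℝ, Y * Δ₀ Y) * phiDeriv U| := by
    rw [hrw, hM₁, ← abs_neg]
    congr 1
    ring
  rw [habs]
  exact lt_of_le_of_lt hk hBT
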